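/- For L, k, γ̄ > 0 with γ̄ the mean parameter, the random variable with density f(γ) = 2 (k/γ̄)^((L+k)/2) γ^((L+k)/2-1) K_{L-k}(2√(kγ/γ̄)) / (Γ(L)Γ(k)) has Laplace transform ∫₀^∞ e^{-sγ} f(γ) dγ = (k/(γ̄ s))^k U(k, k - L + 1, k/(γ̄ s)) for all s > 0, where U is Tricomi's confluent hypergeometric function. -/

import Mathlib

open MeasureTheory Set

/-- Modified Bessel function of the second kind, via its integral representation. -/
noncomputable def besselK (ν x : ℝ) : ℝ :=
  ∫ t in Ioi (0:ℝ), Real.exp (-x * Real.cosh t) * Real.cosh (ν * t)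

/-- The density of the sum of `L` fully correlated squared-K interferers with shape `k`
and mean parameter `γ̄_I`. -/
noncomputable def fcDensity (L k γbar x : ℝ) : ℝ :=
  2 * (k / γbar) ^ ((L + k) / 2) * x ^ ((L + k) / 2 - 1) / (Real.Gamma L * Real.Gamma k) *
    besselK (L - k) (2 * Real.sqrt (k * x / γbar))

/-- Tricomi's confluent hypergeometric function, via its integral representation
`U(a,b,z) = (1/Γ(a)) ∫₀^∞ e^{-z t} t^{a-1} (1+t)^{b-a-1} dt` (for `a, z > 0`). -/
noncomputable def tricomiU (a b z : ℝ) : ℝ :=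
  (1 / Real.Gamma a) * ∫ t in Ioi (0:ℝ), Real.exp (-z * t) * t ^ (a - 1) * (1 + t) ^ (b - a - 1)

lemma cosh_quad (t : ℝ) : t ^ 2 / 8 ≤ Real.cosh t := by
  rw [Real.cosh_eq]
  rcases le_total 0 t with h | h
  · have h1 : t / 2 + 1 ≤ Real.exp (t / 2) := Real.add_one_le_exp _
    have h2 : Real.exp t = Real.exp (t / 2) * Real.exp (t / 2) := by
      rw [← Real.exp_add]; ring_nf
    nlinarith [Real.exp_nonneg (-t), Real.exp_nonneg (t / 2)]
  · have h1 : -t / 2 + 1 ≤ Real.exp (-t / 2) := Real.add_one_le_exp _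
    have h2 : Real.exp (-t) = Real.exp (-t / 2) * Real.exp (-t / 2) := by
      rw [← Real.exp_add]; ring_nf
    nlinarith [Real.exp_nonneg t, Real.exp_nonneg (-t / 2)]

lemma integrable_kernel (ν x : ℝ) (hx : 0 < x) :
    Integrable (fun t : ℝ => Real.exp (ν * t - x * Real.cosh t)) := by
  have hmeas : AEStronglyMeasurable (fun t : ℝ => Real.exp (ν * t - x * Real.cosh t)) volume :=
    (Real.continuous_exp.comp ((continuous_const.mul continuous_id).sub
      (continuous_const.mul Real.continuous_cosh))).aestronglyMeasurable
  refine ((integrable_exp_neg_mul_sq (show (0:ℝ) < x / 16 by positivity)).const_mul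
    (Real.exp (4 * ν ^ 2 / x))).mono' hmeas ?_
  filter_upwards with t
  rw [Real.norm_eq_abs, abs_of_nonneg (Real.exp_nonneg _), ← Real.exp_add]
  apply Real.exp_le_exp.2
  have h1 : t ^ 2 / 8 ≤ Real.cosh t := cosh_quad t
  have h2 : ν * t ≤ |ν| * |t| := by
    calc ν * t ≤ |ν * t| := le_abs_self _
    _ = |ν| * |t| := abs_mul _ _
  have h3 : |ν| * |t| ≤ 4 * ν ^ 2 / x + x / 16 * t ^ 2 := by
    have h5 : |ν| ^ 2 = ν ^ 2 := sq_abs ν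
    have h6 : |t| ^ 2 = t ^ 2 := sq_abs t
    have h7 : (0:ℝ) ≤ (x * |t| - 8 * |ν|) ^ 2 := sq_nonneg _
    have h8 : 16 * x * (|ν| * |t|) ≤ x ^ 2 * t ^ 2 + 64 * ν ^ 2 := by nlinarith
    have h9 : |ν| * |t| ≤ (4 * ν ^ 2 + x ^ 2 / 16 * t ^ 2) / x := by
      rw [le_div_iff₀ hx]; nlinarith
    have h10 : (4 * ν ^ 2 + x ^ 2 / 16 * t ^ 2) / x = 4 * ν ^ 2 / x + x / 16 * t ^ 2 := by
      field_simp
    linarith [h9, h10.le, h10.ge]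
  nlinarith

lemma besselK_neg (ν x : ℝ) : besselK (-ν) x = besselK ν x := by
  unfold besselK
  congr 1
  ext t
  rw [show -ν * t = -(ν * t) by ring, Real.cosh_neg]

lemma integral_line (ν x : ℝ) (hx : 0 < x) :
    ∫ t : ℝ, Real.exp (ν * t - x * Real.cosh t) = 2 * besselK ν x := by
  have hint := integrable_kernel ν x hx
  have hintn := integrable_kernel (-ν) x hx
  rw [← intervalIntegral.integral_Iic_add_Ioi hint.integrableOn hint.integrableOn]
  have h1 : ∫ t in Iic (0:ℝ), Real.exp (ν * t - x * Real.cosh t)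
      = ∫ t in Ioi (0:ℝ), Real.exp (-ν * t - x * Real.cosh t) := by
    have h := integral_comp_neg_Ioi 0 (fun t => Real.exp (ν * t - x * Real.cosh t))
    simp only [neg_zero] at h
    rw [← h]
    refine setIntegral_congr_fun measurableSet_Ioi (fun t _ => ?_)
    rw [Real.cosh_neg]; ring_nf
  rw [h1, ← integral_add hintn.integrableOn hint.integrableOn]
  have h2 : ∀ t : ℝ, Real.exp (-ν * t - x * Real.cosh t) + Real.exp (ν * t - x * Real.cosh t)
      = 2 * (Real.exp (-x * Real.cosh t) * Real.cosh (ν * t)) := by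
    intro t
    rw [Real.cosh_eq (ν * t),
      show -ν * t - x * Real.cosh t = -(ν * t) + -x * Real.cosh t by ring,
      show ν * t - x * Real.cosh t = ν * t + -x * Real.cosh t by ring,
      Real.exp_add, Real.exp_add]
    ring
  simp_rw [h2]
  rw [integral_const_mul]
  rfl

lemma integral_rep (ν b : ℝ) (hb : 0 < b) :
    ∫ w in Ioi (0:ℝ), w ^ (ν - 1) * Real.exp (-(w + b / w)) =
      2 * b ^ (ν / 2) * besselK ν (2 * Real.sqrt b) := by
  set r := Real.sqrt b with hr_def
  have hr : 0 < r := Real.sqrt_pos.2 hb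
  have hrr : r * r = b := Real.mul_self_sqrt hb.le
  have himg : (fun t : ℝ => r * Real.exp t) '' univ = Ioi (0:ℝ) := by
    ext x
    simp only [image_univ, mem_range, mem_Ioi]
    constructor
    · rintro ⟨t, rfl⟩; positivity
    · intro hx
      exact ⟨Real.log (x / r), by rw [Real.exp_log (by positivity)]; field_simp⟩
  have hderiv : ∀ t ∈ (univ : Set ℝ),
      HasDerivWithinAt (fun t : ℝ => r * Real.exp t) (r * Real.exp t) univ t := fun t _ =>
    ((Real.hasDerivAt_exp t).const_mul r).hasDerivWithinAt
  have hinj : InjOn (fun t : ℝ => r * Real.exp t) univ := by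
    intro a _ b _ hab
    simpa using Real.exp_injective (mul_left_cancel₀ hr.ne' hab)
  have hsub := integral_image_eq_integral_abs_deriv_smul MeasurableSet.univ hderiv hinj
      (fun w : ℝ => w ^ (ν - 1) * Real.exp (-(w + b / w)))
  rw [himg] at hsub
  rw [hsub, setIntegral_univ]
  have hre : ∀ t : ℝ, |r * Real.exp t| • ((r * Real.exp t) ^ (ν - 1) *
      Real.exp (-(r * Real.exp t + b / (r * Real.exp t)))) =
      r ^ ν * Real.exp (ν * t - 2 * r * Real.cosh t) := by
    intro t
    have het : (0:ℝ) < Real.exp t := Real.exp_pos t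
    have h1 : b / (r * Real.exp t) = r * Real.exp (-t) := by
      rw [Real.exp_neg, ← hrr]; field_simp
    have h2 : r ^ ν = r * r ^ (ν - 1) := by
      calc r ^ ν = r ^ ((1:ℝ) + (ν - 1)) := by norm_num
        _ = r ^ (1:ℝ) * r ^ (ν - 1) := Real.rpow_add hr _ _
        _ = r * r ^ (ν - 1) := by rw [Real.rpow_one]
    have h3 : ν * t - 2 * r * Real.cosh t
        = t + (t * (ν - 1) + -(r * Real.exp t + r * Real.exp (-t))) := by
      rw [Real.cosh_eq]; ring
    rw [smul_eq_mul, abs_of_nonneg (by positivity), h1,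
      Real.mul_rpow hr.le het.le, Real.rpow_def_of_pos het, Real.log_exp,
      h3, Real.exp_add, Real.exp_add, h2]
    ring
  simp_rw [hre]
  rw [integral_const_mul, integral_line ν (2 * r) (by positivity)]
  have h4 : r ^ ν = b ^ (ν / 2) := by
    rw [hr_def, Real.sqrt_eq_rpow, ← Real.rpow_mul hb.le, one_div_mul_eq_div]
  rw [h4]; ring

lemma integrableOn_gamma (p r : ℝ) (hp : 0 < p) (hr : 0 < r) :
    IntegrableOn (fun t : ℝ => t ^ (p - 1) * Real.exp (-(r * t))) (Ioi 0) := by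
  have h := Real.GammaIntegral_convergent hp
  have h3 : IntegrableOn (fun x : ℝ => Real.exp (-(r * x)) * (r * x) ^ (p - 1)) (Ioi 0) := by
    have h2 := (integrableOn_Ioi_comp_mul_left_iff
      (fun x : ℝ => Real.exp (-x) * x ^ (p - 1)) 0 hr).2 (by simpa using h)
    simpa using h2
  refine (h3.const_mul (r ^ ((1:ℝ) - p))).congr ?_
  filter_upwards [ae_restrict_mem measurableSet_Ioi] with x hx
  have hx' : (0:ℝ) < x := hx
  calc r ^ ((1:ℝ) - p) * (Real.exp (-(r * x)) * (r * x) ^ (p - 1))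
      = (r ^ ((1:ℝ) - p) * r ^ (p - 1)) * (x ^ (p - 1) * Real.exp (-(r * x))) := by
        rw [Real.mul_rpow hr.le hx'.le]; ring
    _ = x ^ (p - 1) * Real.exp (-(r * x)) := by
        rw [← Real.rpow_add hr, show (1:ℝ) - p + (p - 1) = 0 by ring, Real.rpow_zero, one_mul]

lemma F_eq (L k s c : ℝ) {w : ℝ} (hw : 0 < w) (γ : ℝ) :
    γ ^ (L - 1) * Real.exp (-(s * γ)) * (w ^ (k - L - 1) * Real.exp (-(w + c * γ / w)))
      = w ^ (k - L - 1) * Real.exp (-w) * (γ ^ (L - 1) * Real.exp (-((s + c / w) * γ))) := by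
  have he : Real.exp (-(s * γ)) * Real.exp (-(w + c * γ / w))
      = Real.exp (-w) * Real.exp (-((s + c / w) * γ)) := by
    rw [← Real.exp_add, ← Real.exp_add]
    congr 1
    field_simp
    ring
  calc γ ^ (L - 1) * Real.exp (-(s * γ)) * (w ^ (k - L - 1) * Real.exp (-(w + c * γ / w)))
      = w ^ (k - L - 1) * (Real.exp (-(s * γ)) * Real.exp (-(w + c * γ / w))) * γ ^ (L - 1) := by
        ring
    _ = w ^ (k - L - 1) * (Real.exp (-w) * Real.exp (-((s + c / w) * γ))) * γ ^ (L - 1) := by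
        rw [he]
    _ = w ^ (k - L - 1) * Real.exp (-w) * (γ ^ (L - 1) * Real.exp (-((s + c / w) * γ))) := by
        ring

lemma inner_gamma (L k s c : ℝ) (hL : 0 < L) (hs : 0 < s) (hc : 0 < c) {w : ℝ} (hw : 0 < w) :
    ∫ γ in Ioi (0:ℝ), γ ^ (L - 1) * Real.exp (-(s * γ)) *
        (w ^ (k - L - 1) * Real.exp (-(w + c * γ / w)))
      = Real.Gamma L * (w ^ (k - 1) * Real.exp (-w) * (s * w + c) ^ (-L)) := by
  have ha : 0 < s + c / w := by positivity
  simp_rw [F_eq L k s c hw]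
  rw [integral_const_mul, Real.integral_rpow_mul_exp_neg_mul_Ioi hL ha]
  have h2 : (1 / (s + c / w)) ^ L = w ^ L * (s * w + c) ^ (-L) := by
    rw [show (1 : ℝ) / (s + c / w) = w / (s * w + c) by field_simp,
      Real.div_rpow hw.le (by positivity), Real.rpow_neg (by positivity), div_eq_mul_inv]
  rw [h2]
  have h3 : w ^ (k - L - 1) * w ^ L = w ^ (k - 1) := by
    rw [← Real.rpow_add hw, show k - L - 1 + L = k - 1 by ring]
  calc w ^ (k - L - 1) * Real.exp (-w) * (w ^ L * (s * w + c) ^ (-L) * Real.Gamma L)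
      = (w ^ (k - L - 1) * w ^ L) * Real.exp (-w) * (s * w + c) ^ (-L) * Real.Gamma L := by ring
    _ = Real.Gamma L * (w ^ (k - 1) * Real.exp (-w) * (s * w + c) ^ (-L)) := by rw [h3]; ring

lemma fc_rw (L k γbar : ℝ) (hL : 0 < L) (hk : 0 < k) (hγ : 0 < γbar) {γ : ℝ} (hγp : 0 < γ) :
    fcDensity L k γbar γ = (k / γbar) ^ L * γ ^ (L - 1) / (Real.Gamma L * Real.Gamma k) *
      ∫ w in Ioi (0:ℝ), w ^ (k - L - 1) * Real.exp (-(w + k / γbar * γ / w)) := by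
  have hc : 0 < k / γbar := by positivity
  have hb : 0 < k / γbar * γ := by positivity
  have h1 : ∫ w in Ioi (0:ℝ), w ^ (k - L - 1) * Real.exp (-(w + k / γbar * γ / w))
      = 2 * (k / γbar * γ) ^ ((k - L) / 2) * besselK (k - L) (2 * Real.sqrt (k / γbar * γ)) := by
    have h := integral_rep (k - L) (k / γbar * γ) hb
    rw [show k - L - 1 = k - L - 1 from rfl]
    convert h using 3 <;> ring
  rw [h1]
  unfold fcDensity
  rw [show k * γ / γbar = k / γbar * γ by ring,
    show L - k = -(k - L) by ring, besselK_neg]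
  rw [Real.mul_rpow hc.le hγp.le]
  rw [show (L + k) / 2 = L + (k - L) / 2 by ring,
    show L + (k - L) / 2 - 1 = L - 1 + (k - L) / 2 by ring, Real.rpow_add hc,
    Real.rpow_add hγp]
  ring

/-- Laplace transform of the fully-correlated interference density:
`∫₀^∞ e^{-sγ} f(γ) dγ = (k/(γ̄ s))^k U(k, k-L+1, k/(γ̄ s))` for `s > 0`. -/
theorem fcDensity_laplace_transform (L k γbar : ℝ)
    (hL : 0 < L) (hk : 0 < k) (hγ : 0 < γbar) :
    ∀ s : ℝ, 0 < s →
      ∫ γ in Ioi (0:ℝ), Real.exp (-s * γ) * fcDensity L k γbar γ =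
        (k / (γbar * s)) ^ k * tricomiU k (k - L + 1) (k / (γbar * s)) := by
  intro s hs
  have hΓL : 0 < Real.Gamma L := Real.Gamma_pos_of_pos hL
  have hΓk : 0 < Real.Gamma k := Real.Gamma_pos_of_pos hk
  set c := k / γbar with hc_def
  have hc : 0 < c := by positivity
  set z := k / (γbar * s) with hz_def
  have hz : 0 < z := by positivity
  have hsz : s * z = c := by rw [hz_def, hc_def]; field_simp
  set F : ℝ → ℝ → ℝ := fun γ w =>
    γ ^ (L - 1) * Real.exp (-(s * γ)) *
      (w ^ (k - L - 1) * Real.exp (-(w + c * γ / w))) with hF_def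
  -- Step 1: rewrite the integrand using the Bessel representation
  have step1 : ∫ γ in Ioi (0:ℝ), Real.exp (-s * γ) * fcDensity L k γbar γ
      = c ^ L / (Real.Gamma L * Real.Gamma k) *
        ∫ γ in Ioi (0:ℝ), ∫ w in Ioi (0:ℝ), F γ w := by
    rw [← integral_const_mul]
    refine setIntegral_congr_fun measurableSet_Ioi (fun γ hγp => ?_)
    have hγp' : (0:ℝ) < γ := hγp
    rw [fc_rw L k γbar hL hk hγ hγp', hF_def]
    simp only []
    rw [show (∫ w in Ioi (0:ℝ), γ ^ (L - 1) * Real.exp (-(s * γ)) *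
        (w ^ (k - L - 1) * Real.exp (-(w + c * γ / w))))
      = γ ^ (L - 1) * Real.exp (-(s * γ)) *
        ∫ w in Ioi (0:ℝ), w ^ (k - L - 1) * Real.exp (-(w + c * γ / w))
      from integral_const_mul _ _]
    rw [neg_mul]
    ring
  -- measurability of the double integrand
  have hFmeas : AEStronglyMeasurable (Function.uncurry F)
      ((volume.restrict (Ioi (0:ℝ))).prod (volume.restrict (Ioi (0:ℝ)))) := by
    rw [Measure.prod_restrict]
    refine ContinuousOn.aestronglyMeasurable ?_ (measurableSet_Ioi.prod measurableSet_Ioi)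
    have h1 : ContinuousOn (fun p : ℝ × ℝ => p.1 ^ (L - 1)) (Ioi 0 ×ˢ Ioi 0) :=
      continuous_fst.continuousOn.rpow_const fun p hp => Or.inl (ne_of_gt hp.1)
    have h2 : ContinuousOn (fun p : ℝ × ℝ => Real.exp (-(s * p.1))) (Ioi 0 ×ˢ Ioi 0) :=
      (Real.continuous_exp.comp (continuous_const.mul continuous_fst).neg).continuousOn
    have h3 : ContinuousOn (fun p : ℝ × ℝ => p.2 ^ (k - L - 1)) (Ioi 0 ×ˢ Ioi 0) :=
      continuous_snd.continuousOn.rpow_const fun p hp => Or.inl (ne_of_gt hp.2)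
    have h4 : ContinuousOn (fun p : ℝ × ℝ => Real.exp (-(p.2 + c * p.1 / p.2)))
        (Ioi 0 ×ˢ Ioi 0) := by
      refine Real.continuous_exp.comp_continuousOn ?_
      refine ContinuousOn.neg (ContinuousOn.add continuous_snd.continuousOn ?_)
      exact (continuous_const.mul continuous_fst).continuousOn.div
        continuous_snd.continuousOn fun p hp => ne_of_gt hp.2
    exact ((h1.mul h2).mul (h3.mul h4))
  -- integrability of the double integrand
  have hInt : Integrable (Function.uncurry F)
      ((volume.restrict (Ioi (0:ℝ))).prod (volume.restrict (Ioi (0:ℝ)))) := by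
    rw [integrable_prod_iff' hFmeas]
    constructor
    · filter_upwards [ae_restrict_mem measurableSet_Ioi] with w hw
      have hw' : (0:ℝ) < w := hw
      have haw : 0 < s + c / w := by positivity
      refine (((integrableOn_gamma L (s + c / w) hL haw).const_mul
        (w ^ (k - L - 1) * Real.exp (-w))).congr ?_)
      filter_upwards with γ
      rw [Function.uncurry, hF_def]
      simp only []
      rw [F_eq L k s c hw' γ]
    · -- integrability of w ↦ ∫ γ, ‖F γ w‖
      have hkey : ∀ w : ℝ, w ∈ Ioi (0:ℝ) →
          (∫ γ in Ioi (0:ℝ), ‖Function.uncurry F (γ, w)‖)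
            = Real.Gamma L * (w ^ (k - 1) * Real.exp (-w) * (s * w + c) ^ (-L)) := by
        intro w hw
        have hw' : (0:ℝ) < w := hw
        rw [show (∫ γ in Ioi (0:ℝ), ‖Function.uncurry F (γ, w)‖)
            = ∫ γ in Ioi (0:ℝ), F γ w from
          setIntegral_congr_fun measurableSet_Ioi fun γ hγp => by
            rw [Real.norm_eq_abs, Function.uncurry]
            exact abs_of_nonneg (by
              have hγp' : (0:ℝ) < γ := hγp
              rw [hF_def]
              positivity)]
        exact inner_gamma L k s c hL hs hc hw'
      have hmeas2 : AEStronglyMeasurable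
          (fun w => ∫ γ in Ioi (0:ℝ), ‖Function.uncurry F (γ, w)‖)
          (volume.restrict (Ioi (0:ℝ))) :=
        hFmeas.prod_swap.norm.integral_prod_right'
      have hbound : Integrable (fun w : ℝ => Real.Gamma L * c ^ (-L) *
          (w ^ (k - 1) * Real.exp (-w))) (volume.restrict (Ioi (0:ℝ))) := by
        have := (integrableOn_gamma k 1 hk one_pos).const_mul (Real.Gamma L * c ^ (-L))
        simpa using this
      refine Integrable.mono' hbound hmeas2 ?_
      filter_upwards [ae_restrict_mem measurableSet_Ioi] with w hw
      have hw' : (0:ℝ) < w := hw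
      rw [hkey w hw, Real.norm_eq_abs, abs_of_nonneg (by positivity)]
      have hle : (s * w + c) ^ (-L) ≤ c ^ (-L) :=
        Real.rpow_le_rpow_of_nonpos hc (by nlinarith) (by linarith)
      have h0 : (0:ℝ) ≤ w ^ (k - 1) * Real.exp (-w) := by positivity
      calc Real.Gamma L * (w ^ (k - 1) * Real.exp (-w) * (s * w + c) ^ (-L))
          ≤ Real.Gamma L * (w ^ (k - 1) * Real.exp (-w) * c ^ (-L)) := by
            apply mul_le_mul_of_nonneg_left ?_ hΓL.le
            exact mul_le_mul_of_nonneg_left hle h0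
        _ = Real.Gamma L * c ^ (-L) * (w ^ (k - 1) * Real.exp (-w)) := by ring
  -- Step 2: Fubini and inner Gamma integral
  have step2 : (∫ γ in Ioi (0:ℝ), ∫ w in Ioi (0:ℝ), F γ w)
      = Real.Gamma L * ∫ w in Ioi (0:ℝ), w ^ (k - 1) * Real.exp (-w) * (s * w + c) ^ (-L) := by
    rw [integral_integral_swap hInt, ← integral_const_mul]
    refine setIntegral_congr_fun measurableSet_Ioi (fun w hw => ?_)
    exact inner_gamma L k s c hL hs hc hw
  -- Step 3: change of variables w = z * x
  have step3 : (∫ w in Ioi (0:ℝ), w ^ (k - 1) * Real.exp (-w) * (s * w + c) ^ (-L))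
      = z * ∫ x in Ioi (0:ℝ),
          (z * x) ^ (k - 1) * Real.exp (-(z * x)) * (s * (z * x) + c) ^ (-L) := by
    have h := integral_comp_mul_left_Ioi
      (fun w => w ^ (k - 1) * Real.exp (-w) * (s * w + c) ^ (-L)) 0 hz
    rw [mul_zero, smul_eq_mul] at h
    rw [h, ← mul_assoc, mul_inv_cancel₀ hz.ne', one_mul]
  -- Step 4: simplify the substituted integrand
  have step4 : (∫ x in Ioi (0:ℝ),
        (z * x) ^ (k - 1) * Real.exp (-(z * x)) * (s * (z * x) + c) ^ (-L))
      = z ^ (k - 1) * c ^ (-L) * ∫ x in Ioi (0:ℝ),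
          Real.exp (-z * x) * x ^ (k - 1) * (1 + x) ^ (k - L + 1 - k - 1) := by
    rw [← integral_const_mul]
    refine setIntegral_congr_fun measurableSet_Ioi (fun x hx => ?_)
    have hx' : (0:ℝ) < x := hx
    have e1 : (z * x) ^ (k - 1) = z ^ (k - 1) * x ^ (k - 1) :=
      Real.mul_rpow hz.le hx'.le
    have e2 : s * (z * x) + c = c * (1 + x) := by
      rw [show s * (z * x) = s * z * x by ring, hsz]; ring
    have e3 : (c * (1 + x)) ^ (-L) = c ^ (-L) * (1 + x) ^ (-L) :=
      Real.mul_rpow hc.le (by linarith)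
    rw [e1, e2, e3, show k - L + 1 - k - 1 = -L by ring, neg_mul]
    ring
  rw [step1, step2, step3, step4]
  unfold tricomiU
  have hzz : z * z ^ (k - 1) = z ^ k := by
    nth_rewrite 1 [← Real.rpow_one z]
    rw [← Real.rpow_add hz]
    norm_num
  rw [← hzz, Real.rpow_neg hc.le]
  have hcL : (0:ℝ) < c ^ L := Real.rpow_pos_of_pos hc L
  field_simp
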